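/- arXiv:1107.2848 — 4 statements merged into one kernel-verified Lean document; each statement's English description precedes it below -/
import Mathlib

section
/- Let $c > 0$, $\xi_0 > 0$ and $0 < \epsilon < \min\{c, \xi_0\}$. If a sequence of nonnegative reals $\{\theta_k\}$ satisfies $\theta_0 = \xi_0$, $\theta_{k+1} \leq \theta_k - \theta_k^2/c$ and $\theta_{k+1} \leq (1 - \epsilon/c)\theta_k$ for all $k$, then for any $\rho \in (0,1)$ and any natural number $K \geq \frac{c}{\epsilon}(1 + \log\frac{1}{\rho}) + 2 - \frac{c}{\xi_0}$, we have $\theta_K \leq \epsilon\rho$. -/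
lemma aux_quad (c x a : ℝ) (hc : 0 < c) (hx : 0 ≤ x) (hxa : x ≤ a) :
    x - x ^ 2 / c ≤ c * a / (a + c) := by
  have ha : 0 ≤ a := hx.trans hxa
  have hL : x - x ^ 2 / c = (c * x - x ^ 2) / c := by field_simp
  rw [hL, div_le_div_iff₀ hc (by positivity : (0:ℝ) < a + c)]
  rcases le_or_gt x c with h | h
  · nlinarith [mul_nonneg (sub_nonneg.2 hxa) (sub_nonneg.2 h),
      mul_nonneg (mul_nonneg ha hx) hx]
  · have h5 : (c * x - x ^ 2) * (a + c) ≤ 0 :=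
      mul_nonpos_of_nonpos_of_nonneg (by nlinarith) (by linarith)
    nlinarith [mul_nonneg (mul_nonneg ha hc.le) hc.le]

/-- Deterministic core of Theorem 1(i): combined quadratic- and linear-decrease
recursions yield `θ_K ≤ ε·ρ` after `K ≥ (c/ε)(1 + log(1/ρ)) + 2 - c/ξ₀` steps. -/
theorem stmt_1 (c ξ0 ε ρ : ℝ) (hc : 0 < c) (hξ0 : 0 < ξ0)
    (hε : 0 < ε) (hεc : ε < c) (hεξ0 : ε < ξ0) (hρ : ρ ∈ Set.Ioo (0 : ℝ) 1)
    (θ : ℕ → ℝ) (hnn : ∀ k, 0 ≤ θ k) (hθ0 : θ 0 = ξ0)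
    (hrec1 : ∀ k, θ (k + 1) ≤ θ k - (θ k) ^ 2 / c)
    (hrec2 : ∀ k, θ (k + 1) ≤ (1 - ε / c) * θ k)
    (K : ℕ) (hK : c / ε * (1 + Real.log (1 / ρ)) + 2 - c / ξ0 ≤ (K : ℝ)) :
    θ K ≤ ε * ρ := by
  obtain ⟨hρ0, hρ1⟩ := hρ
  set L : ℝ := Real.log (1 / ρ) with hLdef
  have hL0 : 0 < L := Real.log_pos (by rw [lt_div_iff₀ hρ0]; linarith)
  -- quadratic phase bound
  have hbound : ∀ k : ℕ, θ k ≤ c * ξ0 / (k * ξ0 + c) := by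
    intro k
    induction k with
    | zero =>
      rw [hθ0]
      push_cast
      rw [zero_mul, zero_add, mul_comm, mul_div_assoc, div_self hc.ne', mul_one]
    | succ k ih =>
      have hden : (0:ℝ) < k * ξ0 + c := by positivity
      set a : ℝ := c * ξ0 / (k * ξ0 + c) with hadef
      have ha0 : 0 ≤ a := by positivity
      have h1 : θ (k + 1) ≤ c * a / (a + c) :=
        (hrec1 k).trans (aux_quad c (θ k) a hc (hnn k) ih)
      have h2 : c * a / (a + c) = c * ξ0 / ((k + 1 : ℕ) * ξ0 + c) := by
        rw [hadef]
        have hden2 : (0:ℝ) < ((k:ℝ) + 1) * ξ0 + c := by positivity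
        push_cast
        rw [div_eq_div_iff (by positivity) hden2.ne']
        field_simp
        ring
      rw [h2] at h1
      exact h1
  -- define k1
  set k1 : ℕ := ⌈c / ε - c / ξ0⌉₊ with hk1def
  have hdiff0 : 0 ≤ c / ε - c / ξ0 := by
    have : c / ξ0 ≤ c / ε := div_le_div_of_nonneg_left hc.le hε hεξ0.le
    linarith
  have hk1lb : c / ε - c / ξ0 ≤ (k1 : ℝ) := Nat.le_ceil _
  have hk1ub : (k1 : ℝ) ≤ c / ε - c / ξ0 + 1 := by
    exact (Nat.ceil_lt_add_one hdiff0).le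
  -- θ k1 ≤ ε
  have hθk1 : θ k1 ≤ ε := by
    have hden : (0:ℝ) < k1 * ξ0 + c := by positivity
    refine (hbound k1).trans ?_
    rw [div_le_iff₀ hden]
    have h := mul_le_mul_of_nonneg_right hk1lb (le_of_lt (mul_pos hε hξ0))
    have hexp : (c / ε - c / ξ0) * (ε * ξ0) = c * ξ0 - c * ε := by
      field_simp
    rw [hexp] at h
    nlinarith [mul_pos hε hc]
  -- k1 ≤ K
  have hcε : 0 < c / ε := by positivity
  have hk1K : k1 ≤ K := by
    have : (k1 : ℝ) ≤ (K : ℝ) := by nlinarith [mul_pos hcε hL0]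
    exact_mod_cast this
  -- linear phase
  set q : ℝ := 1 - ε / c with hqdef
  have hq0 : 0 < q := by
    have : ε / c < 1 := (div_lt_one hc).2 hεc
    simp only [hqdef]; linarith
  have hlin : ∀ m : ℕ, θ (k1 + m) ≤ q ^ m * θ k1 := by
    intro m
    induction m with
    | zero => simp
    | succ m ih =>
      calc θ (k1 + (m + 1)) = θ ((k1 + m) + 1) := by ring_nf
        _ ≤ q * θ (k1 + m) := hrec2 _
        _ ≤ q * (q ^ m * θ k1) := mul_le_mul_of_nonneg_left ih hq0.le
        _ = q ^ (m + 1) * θ k1 := by ring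
  set m : ℕ := K - k1 with hmdef
  have hKm : K = k1 + m := by omega
  have hmlb : c / ε * L ≤ (m : ℝ) := by
    have : (m : ℝ) = (K : ℝ) - (k1 : ℝ) := by
      rw [hmdef]; push_cast [hk1K]; ring
    rw [this]
    nlinarith
  -- q^m ≤ ρ
  have hqm : q ^ m ≤ ρ := by
    have hlogq : Real.log q ≤ -(ε / c) := by
      have := Real.log_le_sub_one_of_pos hq0
      simp only [hqdef] at this ⊢
      linarith
    have hm0 : (0:ℝ) ≤ (m:ℝ) := Nat.cast_nonneg m
    have h1 : (m : ℝ) * Real.log q ≤ Real.log ρ := by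
      have h2 : (m : ℝ) * Real.log q ≤ (m : ℝ) * (-(ε / c)) :=
        mul_le_mul_of_nonneg_left hlogq hm0
      have h3 : L ≤ (m : ℝ) * (ε / c) := by
        have := mul_le_mul_of_nonneg_right hmlb (le_of_lt (div_pos hε hc))
        have hcc : c / ε * L * (ε / c) = L := by field_simp
        rw [hcc] at this
        linarith [this]
      have h4 : Real.log ρ = -L := by
        rw [hLdef, one_div, Real.log_inv]; ring
      rw [h4]; nlinarith
    calc q ^ m = Real.exp ((m : ℝ) * Real.log q) := by
          rw [← Real.log_pow, Real.exp_log (pow_pos hq0 m)]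
      _ ≤ Real.exp (Real.log ρ) := Real.exp_le_exp.2 h1
      _ = ρ := Real.exp_log hρ0
  -- conclude
  have hqmpos : 0 ≤ q ^ m := (pow_pos hq0 m).le
  calc θ K = θ (k1 + m) := by rw [hKm]
    _ ≤ q ^ m * θ k1 := hlin m
    _ ≤ q ^ m * ε := mul_le_mul_of_nonneg_left hθk1 hqmpos
    _ ≤ ρ * ε := mul_le_mul_of_nonneg_right hqm hε.le
    _ = ε * ρ := mul_comm _ _
end

section
/- Let $\{\xi_k\}_{k\geq 0}$ be a nonincreasing sequence of nonnegative random variables with $\xi_0 = $ a constant $> 0$, and suppose $\mathbf{E}[\xi_{k+1} \mid \xi_k] \leq (1 - 1/c)\xi_k$ for all $k$ with $\xi_k \geq \epsilon$, where $c > 1$ and $0 < \epsilon < \xi_0$. Then for any $\rho \in (0,1)$ and any $K \geq c\log\frac{\xi_0}{\epsilon\rho}$, $\mathbf{P}(\xi_K \leq \epsilon) \geq 1 - \rho$. -/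
open MeasureTheory

/-- Theorem 1(ii): a nonincreasing nonnegative sequence of random variables with
conditional geometric decrease on `{ξ_k ≥ ε}` satisfies
`P(ξ_K ≤ ε) ≥ 1 - ρ` once `K ≥ c·log(ξ₀/(ε·ρ))`. -/
theorem stmt_4 {Ω : Type*} [MeasurableSpace Ω] (μ : Measure Ω)
    [IsProbabilityMeasure μ]
    (ξ : ℕ → Ω → ℝ) (hmeas : ∀ k, Measurable (ξ k))
    (hint : ∀ k, Integrable (ξ k) μ)
    (hnn : ∀ k ω, 0 ≤ ξ k ω) (hmono : ∀ k ω, ξ (k + 1) ω ≤ ξ k ω)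
    (ξ0 c ε ρ : ℝ) (hξ0 : ∀ ω, ξ 0 ω = ξ0) (hξ0pos : 0 < ξ0)
    (hc : 1 < c) (hε : 0 < ε) (hεξ0 : ε < ξ0) (hρ : ρ ∈ Set.Ioo (0 : ℝ) 1)
    (hcond : ∀ k, ∀ᵐ ω ∂μ, ε ≤ ξ k ω →
      (μ[ξ (k + 1) | MeasurableSpace.comap (ξ k) Real.measurableSpace]) ω ≤
        (1 - 1 / c) * ξ k ω)
    (K : ℕ) (hK : c * Real.log (ξ0 / (ε * ρ)) ≤ (K : ℝ)) :
    ENNReal.ofReal (1 - ρ) ≤ μ {ω | ξ K ω ≤ ε} := by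
  obtain ⟨hρ0, hρ1⟩ := hρ
  have hc0 : (0 : ℝ) < c := lt_trans one_pos hc
  have hq0 : (0 : ℝ) ≤ 1 - 1 / c := by
    have : 1 / c < 1 := (div_lt_one hc0).2 hc
    linarith
  -- thresholded sequence
  set η : ℕ → Ω → ℝ := fun k => Set.indicator {ω | ε ≤ ξ k ω} (ξ k) with hη
  have hA : ∀ k, MeasurableSet {ω | ε ≤ ξ k ω} := fun k =>
    (hmeas k) measurableSet_Ici
  have hηint : ∀ k, Integrable (η k) μ := fun k => (hint k).indicator (hA k)
  have hηnn : ∀ k ω, 0 ≤ η k ω := fun k ω =>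
    Set.indicator_nonneg (fun ω _ => hnn k ω) ω
  -- key decay step
  have key : ∀ k, ∫ ω, η (k + 1) ω ∂μ ≤ (1 - 1 / c) * ∫ ω, η k ω ∂μ := by
    intro k
    have hm := (hmeas k).comap_le
    haveI : SigmaFinite (μ.trim hm) := by
      haveI : IsFiniteMeasure (μ.trim hm) := isFiniteMeasure_trim hm
      infer_instance
    set A : Set Ω := {ω | ε ≤ ξ k ω} with hA_def
    have hAm : MeasurableSet[MeasurableSpace.comap (ξ k) Real.measurableSpace] A := ⟨Set.Ici ε, measurableSet_Ici, rfl⟩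
    have hsub : {ω | ε ≤ ξ (k + 1) ω} ⊆ A := fun ω hω =>
      le_trans hω (hmono k ω)
    have step1 : ∫ ω, η (k + 1) ω ∂μ ≤ ∫ ω in A, ξ (k + 1) ω ∂μ := by
      rw [hη]
      simp only
      rw [integral_indicator (hA (k + 1))]
      exact setIntegral_mono_set (hint (k + 1)).integrableOn
        (Filter.Eventually.of_forall fun ω => hnn (k + 1) ω)
        (HasSubset.Subset.eventuallyLE hsub)
    have step2 : ∫ ω in A, ξ (k + 1) ω ∂μ = ∫ ω in A, (μ[ξ (k + 1)|MeasurableSpace.comap (ξ k) Real.measurableSpace]) ω ∂μ :=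
      (setIntegral_condExp hm (hint (k + 1)) hAm).symm
    have step3 : ∫ ω in A, (μ[ξ (k + 1)|MeasurableSpace.comap (ξ k) Real.measurableSpace]) ω ∂μ ≤
        ∫ ω in A, (1 - 1 / c) * ξ k ω ∂μ := by
      apply setIntegral_mono_ae_restrict integrable_condExp.integrableOn
        (((hint k).const_mul _).integrableOn)
      rw [Filter.EventuallyLE, ae_restrict_iff' (hA k)]
      filter_upwards [hcond k] with ω h hmem
      exact h hmem
    have step4 : ∫ ω in A, (1 - 1 / c) * ξ k ω ∂μ = (1 - 1 / c) * ∫ ω, η k ω ∂μ := by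
      rw [hη]; simp only
      rw [integral_indicator (hA k), integral_const_mul]
    calc ∫ ω, η (k + 1) ω ∂μ ≤ ∫ ω in A, ξ (k + 1) ω ∂μ := step1
      _ = _ := step2
      _ ≤ _ := step3
      _ = _ := step4
  -- geometric decay of expectations
  have decay : ∀ k, ∫ ω, η k ω ∂μ ≤ (1 - 1 / c) ^ k * ξ0 := by
    intro k
    induction k with
    | zero =>
      have : ∀ ω, η 0 ω = ξ0 := by
        intro ω
        have hmem : ω ∈ {ω | ε ≤ ξ 0 ω} := by
          simp only [Set.mem_setOf_eq, hξ0 ω]; linarith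
        simp [hη, Set.indicator_of_mem hmem, hξ0 ω]
      simp [this]
    | succ n ih =>
      calc ∫ ω, η (n + 1) ω ∂μ ≤ (1 - 1 / c) * ∫ ω, η n ω ∂μ := key n
        _ ≤ (1 - 1 / c) * ((1 - 1 / c) ^ n * ξ0) := by
            exact mul_le_mul_of_nonneg_left ih hq0
        _ = (1 - 1 / c) ^ (n + 1) * ξ0 := by ring
  -- bound (1-1/c)^K ξ0 ≤ ε ρ
  have hexp : (1 - 1 / c) ^ K * ξ0 ≤ ε * ρ := by
    have h1 : (1 - 1 / c : ℝ) ≤ Real.exp (-(1 / c)) := by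
      have := Real.add_one_le_exp (-(1 / c))
      linarith
    have h2 : (1 - 1 / c) ^ K ≤ Real.exp (-(1 / c)) ^ K :=
      pow_le_pow_left₀ hq0 h1 K
    have h3 : Real.exp (-(1 / c)) ^ K = Real.exp (-(K / c)) := by
      rw [← Real.exp_nat_mul]; ring_nf
    have hx0 : (0 : ℝ) < ξ0 / (ε * ρ) := by positivity
    have h4 : -((K : ℝ) / c) ≤ -Real.log (ξ0 / (ε * ρ)) := by
      rw [neg_le_neg_iff, le_div_iff₀ hc0]
      linarith
    have h5 : Real.exp (-(K / c : ℝ)) ≤ ε * ρ / ξ0 := by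
      calc Real.exp (-(K / c : ℝ)) ≤ Real.exp (-Real.log (ξ0 / (ε * ρ))) :=
            Real.exp_le_exp.2 h4
        _ = (ξ0 / (ε * ρ))⁻¹ := by rw [Real.exp_neg, Real.exp_log hx0]
        _ = ε * ρ / ξ0 := by field_simp
    calc (1 - 1 / c) ^ K * ξ0 ≤ Real.exp (-(K / c : ℝ)) * ξ0 := by
          rw [← h3]; exact mul_le_mul_of_nonneg_right h2 hξ0pos.le
      _ ≤ (ε * ρ / ξ0) * ξ0 := mul_le_mul_of_nonneg_right h5 hξ0pos.le
      _ = ε * ρ := by field_simp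
  -- Markov
  have hmarkov : ε * (μ {ω | ε ≤ η K ω}).toReal ≤ ∫ ω, η K ω ∂μ :=
    mul_meas_ge_le_integral_of_nonneg
      (Filter.Eventually.of_forall fun ω => hηnn K ω) (hηint K) ε
  have htail : (μ {ω | ε < ξ K ω}).toReal ≤ ρ := by
    have hss : {ω | ε < ξ K ω} ⊆ {ω | ε ≤ η K ω} := by
      intro ω hω
      have hω' : ε < ξ K ω := hω
      have hmem : ω ∈ {ω | ε ≤ ξ K ω} := le_of_lt hω'
      simp only [Set.mem_setOf_eq, hη, Set.indicator_of_mem hmem]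
      exact le_of_lt hω'
    have hle : (μ {ω | ε < ξ K ω}).toReal ≤ (μ {ω | ε ≤ η K ω}).toReal :=
      ENNReal.toReal_mono (measure_ne_top μ _) (measure_mono hss)
    have : ε * (μ {ω | ε ≤ η K ω}).toReal ≤ ε * ρ :=
      le_trans hmarkov (le_trans (decay K) hexp)
    have h' : (μ {ω | ε ≤ η K ω}).toReal ≤ ρ :=
      le_of_mul_le_mul_left this hε
    exact le_trans hle h'
  -- finish
  have hcompl : {ω | ξ K ω ≤ ε} = {ω | ε < ξ K ω}ᶜ := by
    ext ω; simp [not_lt]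
  have hBm : MeasurableSet {ω | ε < ξ K ω} := measurableSet_lt measurable_const (hmeas K)
  rw [hcompl, measure_compl hBm (measure_ne_top μ _)]
  have hm1 : μ {ω | ε < ξ K ω} ≤ ENNReal.ofReal ρ := by
    rw [ENNReal.le_ofReal_iff_toReal_le (measure_ne_top μ _) hρ0.le]
    exact htail
  calc ENNReal.ofReal (1 - ρ) = ENNReal.ofReal 1 - ENNReal.ofReal ρ :=
        ENNReal.ofReal_sub 1 hρ0.le
    _ = 1 - ENNReal.ofReal ρ := by rw [ENNReal.ofReal_one]
    _ ≤ μ Set.univ - μ {ω | ε < ξ K ω} := by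
        rw [measure_univ]; exact tsub_le_tsub_left hm1 1
end

section
/- Let $F = f + \Psi$ be strongly convex with respect to $\|\cdot\|_L$ with parameter $\mu > 0$, with minimizer $x^*$ and minimum $F^*$, and suppose $f$ is convex differentiable. With $H(x,T) = f(x) + \langle\nabla f(x), T\rangle + \frac{1}{2}\|T\|_L^2 + \Psi(x+T)$, one has $\min_T H(x,T) - F^* \leq \gamma_\mu (F(x) - F^*)$, where $\gamma_\mu = 1 - \mu/4$ if $\mu \leq 2$ and $\gamma_\mu = 1/\mu$ otherwise. -/
private lemma convexOn_of_norm_axioms {N : ℕ} (nrmL : (Fin N → ℝ) → ℝ)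
    (hn3 : ∀ (a : ℝ) t, nrmL (a • t) = |a| * nrmL t)
    (hn4 : ∀ s t, nrmL (s + t) ≤ nrmL s + nrmL t) :
    ConvexOn ℝ Set.univ nrmL := by
  refine ⟨convex_univ, fun a _ b _ p q hp hq hpq => ?_⟩
  calc nrmL (p • a + q • b) ≤ nrmL (p • a) + nrmL (q • b) := hn4 _ _
    _ = p * nrmL a + q * nrmL b := by
        rw [hn3, hn3, abs_of_nonneg hp, abs_of_nonneg hq]
    _ = p • nrmL a + q • nrmL b := by simp [smul_eq_mul]

/-- Any norm-like function on a finite-dimensional space dominates a multiple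
of the ambient norm. -/
private lemma exists_norm_lower_bound {N : ℕ} (nrmL : (Fin N → ℝ) → ℝ)
    (hn1 : ∀ t, 0 ≤ nrmL t) (hn2 : ∀ t, nrmL t = 0 ↔ t = 0)
    (hn3 : ∀ (a : ℝ) t, nrmL (a • t) = |a| * nrmL t)
    (hn4 : ∀ s t, nrmL (s + t) ≤ nrmL s + nrmL t) :
    ∃ ε : ℝ, 0 < ε ∧ ∀ T, ε * ‖T‖ ≤ nrmL T := by
  have hcont : Continuous nrmL :=
    (convexOn_of_norm_axioms nrmL hn3 hn4).locallyLipschitz.continuous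
  by_cases hNe : ∃ T : Fin N → ℝ, T ≠ 0
  · obtain ⟨T0, hT0⟩ := hNe
    have hT0n : (0:ℝ) < ‖T0‖ := norm_pos_iff.mpr hT0
    have hsph : (Metric.sphere (0 : Fin N → ℝ) 1).Nonempty := by
      refine ⟨‖T0‖⁻¹ • T0, ?_⟩
      simp [norm_smul, abs_of_pos (inv_pos.mpr hT0n), inv_mul_cancel₀ (ne_of_gt hT0n)]
    obtain ⟨u, hu, humin⟩ := (isCompact_sphere (0 : Fin N → ℝ) 1).exists_isMinOn hsph
      hcont.continuousOn
    have hun : ‖u‖ = 1 := by simpa using hu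
    have hu0 : u ≠ 0 := by
      intro h; rw [h] at hun; simp at hun
    have hε : 0 < nrmL u := by
      rcases lt_or_eq_of_le (hn1 u) with h | h
      · exact h
      · exact absurd ((hn2 u).mp h.symm) hu0
    refine ⟨nrmL u, hε, fun T => ?_⟩
    by_cases hT : T = 0
    · subst hT
      simp [(hn2 0).mpr rfl]
    · have hTn : (0:ℝ) < ‖T‖ := norm_pos_iff.mpr hT
      have hmem : ‖T‖⁻¹ • T ∈ Metric.sphere (0 : Fin N → ℝ) 1 := by
        simp [norm_smul, abs_of_pos (inv_pos.mpr hTn), inv_mul_cancel₀ (ne_of_gt hTn)]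
      have h1 : nrmL u ≤ nrmL (‖T‖⁻¹ • T) := humin hmem
      have h2 : nrmL u ≤ ‖T‖⁻¹ * nrmL T := by
        rwa [hn3, abs_of_pos (inv_pos.mpr hTn)] at h1
      have h3 := mul_le_mul_of_nonneg_left h2 hTn.le
      have h4 : ‖T‖ * (‖T‖⁻¹ * nrmL T) = nrmL T := by
        field_simp
      nlinarith [h3, h4.le, h4.ge]
  · push_neg at hNe
    refine ⟨1, one_pos, fun T => ?_⟩
    rw [hNe T]
    simp [(hn2 0).mpr rfl]

/-- A finite convex function on a finite-dimensional space has a linear minorant. -/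
private lemma exists_linear_minorant {N : ℕ} (ψ : (Fin N → ℝ) → ℝ)
    (hc : ConvexOn ℝ Set.univ ψ) :
    ∃ K : ℝ, 0 ≤ K ∧ ∀ T, -K - K * ‖T‖ ≤ ψ T := by
  have hcont : Continuous ψ := hc.locallyLipschitz.continuous
  obtain ⟨u, hu, humin⟩ := (isCompact_closedBall (0 : Fin N → ℝ) 1).exists_isMinOn
    ⟨0, by simp⟩ hcont.continuousOn
  set m := ψ u with hm
  refine ⟨|m| + |ψ 0|, by positivity, fun T => ?_⟩
  by_cases hT : ‖T‖ ≤ 1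
  · have h1 : m ≤ ψ T := humin (by simpa [Metric.mem_closedBall, dist_zero_right] using hT)
    have h2 : 0 ≤ (|m| + |ψ 0|) * ‖T‖ := by positivity
    have h3 := neg_abs_le m
    have h4 := abs_nonneg (ψ 0)
    linarith
  · push_neg at hT
    have hTn : (0:ℝ) < ‖T‖ := by linarith
    set n := ‖T‖ with hn
    have hinv : n⁻¹ ≤ 1 := by
      rw [inv_le_one_iff₀]; right; linarith
    have hmem : n⁻¹ • T ∈ Metric.closedBall (0 : Fin N → ℝ) 1 := by
      have hnrm : ‖n⁻¹ • T‖ = 1 := by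
        rw [norm_smul, Real.norm_eq_abs, abs_of_pos (inv_pos.mpr hTn), ← hn,
          inv_mul_cancel₀ (ne_of_gt hTn)]
      rw [Metric.mem_closedBall, dist_zero_right, hnrm]
    have h1 : m ≤ ψ (n⁻¹ • T) := humin hmem
    have hcv := hc.2 (Set.mem_univ (0 : Fin N → ℝ)) (Set.mem_univ T)
      (by linarith : (0:ℝ) ≤ 1 - n⁻¹) (by positivity : (0:ℝ) ≤ n⁻¹) (by ring)
    have hcv' : ψ (n⁻¹ • T) ≤ (1 - n⁻¹) * ψ 0 + n⁻¹ * ψ T := by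
      simpa [smul_eq_mul] using hcv
    have key : m ≤ (1 - n⁻¹) * ψ 0 + n⁻¹ * ψ T := le_trans h1 hcv'
    have h3 : n * m ≤ (n - 1) * ψ 0 + ψ T := by
      have := mul_le_mul_of_nonneg_left key hTn.le
      have hexp : n * ((1 - n⁻¹) * ψ 0 + n⁻¹ * ψ T) = (n - 1) * ψ 0 + ψ T := by
        field_simp
      linarith [this, hexp.le, hexp.ge]
    have b1 : n * (-|m|) ≤ n * m := mul_le_mul_of_nonneg_left (neg_abs_le m) hTn.le
    have b2 : (n - 1) * ψ 0 ≤ (n - 1) * |ψ 0| :=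
      mul_le_mul_of_nonneg_left (le_abs_self _) (by linarith)
    nlinarith [abs_nonneg m, abs_nonneg (ψ 0)]

set_option maxHeartbeats 2000000 in
/-- Lemma 5: for `F = f + Ψ` strongly convex w.r.t. `‖·‖_L` with parameter `μ > 0`
(`f` convex differentiable with gradient `g`), with
`H(x,T) = f(x) + ⟨g(x),T⟩ + ‖T‖_L²/2 + Ψ(x+T)`,
`min_T H(x,T) - F* ≤ γ_μ (F(x) - F*)` where `γ_μ = 1 - μ/4` if `μ ≤ 2`,
`γ_μ = 1/μ` otherwise. -/
theorem stmt_11 (N : ℕ) (f Ψ : (Fin N → ℝ) → ℝ) (g : (Fin N → ℝ) → Fin N → ℝ)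
    (nrmL : (Fin N → ℝ) → ℝ)
    (hn1 : ∀ t, 0 ≤ nrmL t) (hn2 : ∀ t, nrmL t = 0 ↔ t = 0)
    (hn3 : ∀ (a : ℝ) t, nrmL (a • t) = |a| * nrmL t)
    (hn4 : ∀ s t, nrmL (s + t) ≤ nrmL s + nrmL t)
    (hΨ : ConvexOn ℝ Set.univ Ψ)
    (hfconv : ∀ x y : Fin N → ℝ, f x + (∑ j, g x j * (y j - x j)) ≤ f y)
    (μ : ℝ) (hμ : 0 < μ)
    (F' : (Fin N → ℝ) → Fin N → ℝ)
    (hsc : ∀ x y : Fin N → ℝ,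
      (f y + Ψ y) + (∑ j, F' y j * (x j - y j)) + μ / 2 * nrmL (x - y) ^ 2
        ≤ f x + Ψ x)
    (xstar : Fin N → ℝ) (hmin : ∀ y, f xstar + Ψ xstar ≤ f y + Ψ y)
    (x : Fin N → ℝ) :
    sInf {r : ℝ | ∃ T : Fin N → ℝ,
        r = f x + (∑ j, g x j * T j) + nrmL T ^ 2 / 2 + Ψ (x + T)}
      - (f xstar + Ψ xstar) ≤
      (if μ ≤ 2 then 1 - μ / 4 else 1 / μ) * (f x + Ψ x - (f xstar + Ψ xstar)) := by
  have hΔ : 0 ≤ f x + Ψ x - (f xstar + Ψ xstar) := by linarith [hmin x]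
  -- Step 1: strong convexity implies `μ/2 ‖x - x*‖² ≤ F(x) - F*`.
  have key1 : μ / 2 * nrmL (x - xstar) ^ 2 ≤ f x + Ψ x - (f xstar + Ψ xstar) := by
    by_contra hcon
    push_neg at hcon
    set c2 := nrmL (x - xstar) ^ 2 with hc2
    set Δ := f x + Ψ x - (f xstar + Ψ xstar) with hΔdef
    set A := μ / 2 * c2 with hA
    have hApos : 0 < A := lt_of_le_of_lt hΔ hcon
    set t := (A - Δ) / (4 * A) with ht
    have ht0 : 0 < t := div_pos (by linarith) (by linarith)
    have ht1 : t ≤ 1 / 4 := by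
      rw [ht, div_le_iff₀ (by linarith : (0:ℝ) < 4 * A)]
      linarith
    set z := xstar + t • (x - xstar) with hz
    set s := ∑ j, F' z j * (x j - xstar j) with hs
    -- first application of strong convexity: `s ≥ μ t c2 / 2 ≥ 0`
    have sum1 : ∑ j, F' z j * (xstar j - z j) = (-t) * s := by
      rw [hs, Finset.mul_sum]
      refine Finset.sum_congr rfl fun j _ => ?_
      simp only [hz, Pi.add_apply, Pi.smul_apply, Pi.sub_apply, smul_eq_mul]
      ring
    have n1 : nrmL (xstar - z) = t * nrmL (x - xstar) := by
      have hzz : xstar - z = (-t) • (x - xstar) := by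
        funext j
        simp only [hz, Pi.sub_apply, Pi.add_apply, Pi.smul_apply, smul_eq_mul]
        ring
      rw [hzz, hn3, abs_neg, abs_of_pos ht0]
    have hi := hsc xstar z
    rw [sum1, n1] at hi
    have hzmin := hmin z
    have hs1 : μ / 2 * t * c2 ≤ s := by
      have hexp : μ / 2 * (t * nrmL (x - xstar)) ^ 2 = t * (μ / 2 * t * c2) := by
        rw [hc2]; ring
      have h2 : t * (μ / 2 * t * c2) ≤ t * s := by
        have hns : nrmL (xstar - xstar) = 0 := by
          simpa using (hn2 0).mpr rfl
        have hi2 := hsc xstar xstar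
        -- not needed; just use hi and hzmin
        nlinarith [hi, hzmin, hexp]
      exact le_of_mul_le_mul_left h2 ht0
    have hc2nn : 0 ≤ c2 := by rw [hc2]; positivity
    have hs0 : 0 ≤ s := le_trans (by positivity) hs1
    -- second application of strong convexity
    have sum2 : ∑ j, F' z j * (x j - z j) = (1 - t) * s := by
      rw [hs, Finset.mul_sum]
      refine Finset.sum_congr rfl fun j _ => ?_
      simp only [hz, Pi.add_apply, Pi.smul_apply, Pi.sub_apply, smul_eq_mul]
      ring
    have n2 : nrmL (x - z) = (1 - t) * nrmL (x - xstar) := by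
      have hzz : x - z = (1 - t) • (x - xstar) := by
        funext j
        simp only [hz, Pi.sub_apply, Pi.add_apply, Pi.smul_apply, smul_eq_mul]
        ring
      rw [hzz, hn3, abs_of_nonneg (by linarith : (0:ℝ) ≤ 1 - t)]
    have hii := hsc x z
    rw [sum2, n2] at hii
    have hexp2 : μ / 2 * ((1 - t) * nrmL (x - xstar)) ^ 2 = A * (1 - t) ^ 2 := by
      rw [hA, hc2]; ring
    have hts : 0 ≤ (1 - t) * s := mul_nonneg (by linarith) hs0
    have main : f xstar + Ψ xstar + A * (1 - t) ^ 2 ≤ f x + Ψ x := by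
      linarith [hii, hmin z, hexp2.le, hexp2.ge, hts]
    have h2At : 2 * A * t = (A - Δ) / 2 := by
      rw [ht]
      field_simp
      ring
    nlinarith [main, mul_nonneg hApos.le (sq_nonneg t), hcon, h2At, ht0]
  -- boundedness below of the candidate set
  obtain ⟨ε, hε, hεle⟩ := exists_norm_lower_bound nrmL hn1 hn2 hn3 hn4
  have hψconv : ConvexOn ℝ Set.univ
      (fun T : Fin N → ℝ => f x + (∑ j, g x j * T j) + Ψ (x + T)) := by
    refine ⟨convex_univ, fun a _ b _ p q hp hq hpq => ?_⟩
    have hlin : ∑ j, g x j * (p • a + q • b) j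
        = p * (∑ j, g x j * a j) + q * (∑ j, g x j * b j) := by
      rw [Finset.mul_sum, Finset.mul_sum, ← Finset.sum_add_distrib]
      refine Finset.sum_congr rfl fun j _ => ?_
      simp only [Pi.add_apply, Pi.smul_apply, smul_eq_mul]
      ring
    have hΨle : Ψ (x + (p • a + q • b)) ≤ p * Ψ (x + a) + q * Ψ (x + b) := by
      have he : x + (p • a + q • b) = p • (x + a) + q • (x + b) := by
        funext j
        simp only [Pi.add_apply, Pi.smul_apply, smul_eq_mul]
        linear_combination x j * hpq.symm
      rw [he]
      simpa [smul_eq_mul] using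
        hΨ.2 (Set.mem_univ (x + a)) (Set.mem_univ (x + b)) hp hq hpq
    simp only [smul_eq_mul]
    have hfx : p * f x + q * f x = f x := by rw [← add_mul, hpq, one_mul]
    linarith [hlin.le, hlin.ge, hΨle, hfx]
  obtain ⟨K, hK0, hKle⟩ := exists_linear_minorant _ hψconv
  have hBdd : BddBelow {r : ℝ | ∃ T : Fin N → ℝ,
      r = f x + (∑ j, g x j * T j) + nrmL T ^ 2 / 2 + Ψ (x + T)} := by
    refine ⟨-K - K ^ 2 / (2 * ε ^ 2), ?_⟩
    rintro r ⟨T, rfl⟩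
    have h1 : -K - K * ‖T‖ ≤ f x + (∑ j, g x j * T j) + Ψ (x + T) := hKle T
    have h2 : ε * ‖T‖ ≤ nrmL T := hεle T
    have h3 : (ε * ‖T‖) ^ 2 ≤ nrmL T ^ 2 := by
      have := mul_self_le_mul_self (by positivity) h2
      simpa [pow_two] using this
    have h3' : ε ^ 2 * ‖T‖ ^ 2 ≤ nrmL T ^ 2 := by
      calc ε ^ 2 * ‖T‖ ^ 2 = (ε * ‖T‖) ^ 2 := by ring
        _ ≤ nrmL T ^ 2 := h3
    have quad : 0 ≤ ε ^ 2 * ‖T‖ ^ 2 / 2 - K * ‖T‖ + K ^ 2 / (2 * ε ^ 2) := by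
      have h6 : ε ^ 2 * ‖T‖ ^ 2 / 2 - K * ‖T‖ + K ^ 2 / (2 * ε ^ 2)
          = (ε ^ 2 * ‖T‖ - K) ^ 2 / (2 * ε ^ 2) := by
        field_simp
        ring
      rw [h6]
      positivity
    linarith [h1, h3', quad]
  -- generic bound for a step `α ∈ [0,1]`
  have gen : ∀ a : ℝ, 0 ≤ a → a ≤ 1 →
      sInf {r : ℝ | ∃ T : Fin N → ℝ,
        r = f x + (∑ j, g x j * T j) + nrmL T ^ 2 / 2 + Ψ (x + T)}
      ≤ (f x + Ψ x) + a * ((f xstar + Ψ xstar) - (f x + Ψ x))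
        + a ^ 2 / 2 * nrmL (x - xstar) ^ 2 := by
    intro a ha0 ha1
    have hmem : ∀ Tv : Fin N → ℝ,
        f x + (∑ j, g x j * Tv j) + nrmL Tv ^ 2 / 2 + Ψ (x + Tv) ∈
        {r : ℝ | ∃ T : Fin N → ℝ,
          r = f x + (∑ j, g x j * T j) + nrmL T ^ 2 / 2 + Ψ (x + T)} :=
      fun Tv => ⟨Tv, rfl⟩
    set T : Fin N → ℝ := a • (xstar - x) with hT
    have h1 : ∑ j, g x j * T j = a * ∑ j, g x j * (xstar j - x j) := by
      rw [Finset.mul_sum]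
      refine Finset.sum_congr rfl fun j _ => ?_
      simp only [hT, Pi.smul_apply, Pi.sub_apply, smul_eq_mul]
      ring
    have h2 : ∑ j, g x j * (xstar j - x j) ≤ f xstar - f x := by
      linarith [hfconv x xstar]
    have h2' : a * (∑ j, g x j * (xstar j - x j)) ≤ a * (f xstar - f x) :=
      mul_le_mul_of_nonneg_left h2 ha0
    have h4 : nrmL (xstar - x) = nrmL (x - xstar) := by
      have he : xstar - x = (-1 : ℝ) • (x - xstar) := by
        funext j; simp only [Pi.sub_apply, Pi.smul_apply, smul_eq_mul]; ring
      rw [he, hn3]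
      simp
    have h3 : nrmL T = a * nrmL (x - xstar) := by
      rw [hT, hn3, abs_of_nonneg ha0, h4]
    have h5 : Ψ (x + T) ≤ (1 - a) * Ψ x + a * Ψ xstar := by
      have he : x + T = (1 - a) • x + a • xstar := by
        funext j
        simp only [hT, Pi.add_apply, Pi.smul_apply, Pi.sub_apply, smul_eq_mul]
        ring
      rw [he]
      simpa [smul_eq_mul] using
        hΨ.2 (Set.mem_univ x) (Set.mem_univ xstar) (by linarith) ha0 (by ring)
    have hle := csInf_le hBdd (hmem T)
    have h6 : nrmL T ^ 2 = a ^ 2 * nrmL (x - xstar) ^ 2 := by rw [h3]; ring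
    rw [h1, h6] at hle
    refine hle.trans ?_
    nlinarith [h2', h5]
  rcases le_or_gt μ 2 with hμ2 | hμ2
  · rw [if_pos hμ2]
    have G := gen (μ / 2) (by linarith) (by linarith)
    have k2 : μ / 4 * (μ / 2 * nrmL (x - xstar) ^ 2)
        ≤ μ / 4 * (f x + Ψ x - (f xstar + Ψ xstar)) :=
      mul_le_mul_of_nonneg_left key1 (by linarith)
    nlinarith [G, k2]
  · rw [if_neg (not_le.mpr hμ2)]
    have G := gen 1 zero_le_one le_rfl
    have k2 : nrmL (x - xstar) ^ 2 / 2 ≤ 1 / μ * (f x + Ψ x - (f xstar + Ψ xstar)) := by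
      have h := mul_le_mul_of_nonneg_left key1 (inv_pos.mpr hμ).le
      have he : μ⁻¹ * (μ / 2 * nrmL (x - xstar) ^ 2) = nrmL (x - xstar) ^ 2 / 2 := by
        field_simp
      have he2 : μ⁻¹ * (f x + Ψ x - (f xstar + Ψ xstar))
          = 1 / μ * (f x + Ψ x - (f xstar + Ψ xstar)) := by ring
      linarith [h, he.le, he.ge, he2.le, he2.ge]
    nlinarith [G, k2]
end

section
/- Suppose a sequence of nonnegative reals $\{\theta_k\}$ satisfies $\theta_{k+1} \leq \theta_k - \frac{\theta_k^2}{2R^2}$ for a constant $R > 0$, with $\theta_0 \leq \frac{1}{2}R^2$. Then for any $\epsilon \in (0, \theta_0)$ and $k \geq \frac{2R^2}{\epsilon} - 4$, we have $\theta_k \leq \epsilon$. -/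
/-- If `θ_{k+1} ≤ θ_k - θ_k²/(2R²)` with `θ₀ ≤ R²/2`, then for `ε ∈ (0, θ₀)` and
`k ≥ 2R²/ε - 4` we have `θ_k ≤ ε`. -/
theorem stmt_16 (R : ℝ) (hR : 0 < R) (θ : ℕ → ℝ) (hnn : ∀ k, 0 ≤ θ k)
    (hrec : ∀ k, θ (k + 1) ≤ θ k - (θ k) ^ 2 / (2 * R ^ 2))
    (hθ0 : θ 0 ≤ R ^ 2 / 2)
    (ε : ℝ) (hε : ε ∈ Set.Ioo (0 : ℝ) (θ 0))
    (k : ℕ) (hk : 2 * R ^ 2 / ε - 4 ≤ (k : ℝ)) :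
    θ k ≤ ε := by
  obtain ⟨hε0, hεθ⟩ := hε
  have hb : 0 < θ 0 := lt_trans hε0 hεθ
  have ha : (0:ℝ) < 2 * R ^ 2 := by positivity
  have hba : θ 0 ≤ (2 * R ^ 2) / 4 := by nlinarith
  set a := 2 * R ^ 2 with ha'
  set b := θ 0 with hb'
  have key : ∀ n : ℕ, θ n ≤ a * b / (a + n * b) := by
    intro n
    induction n with
    | zero =>
      simp only [Nat.cast_zero, zero_mul, add_zero]
      rw [mul_comm, mul_div_assoc, div_self (ne_of_gt ha), mul_one]
    | succ n ih =>
      have hs : (0:ℝ) < a + n * b := by positivity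
      have hs2 : (0:ℝ) < a + n * b + b := by positivity
      have hBb : a * b / (a + n * b) ≤ b := by
        have hn : (0:ℝ) ≤ (n:ℝ) := Nat.cast_nonneg n
        rw [div_le_iff₀ hs]; nlinarith [mul_nonneg hn (sq_nonneg b)]
      have h1 : θ (n+1) ≤ θ n - (θ n)^2 / a := hrec n
      have h2 : θ n - (θ n)^2 / a ≤ a * b / (a + n * b) - (a * b / (a + n * b))^2 / a := by
        have hθn := hnn n
        have hBnn : 0 ≤ a * b / (a + n * b) := by positivity
        have hfac : 0 ≤ (a * b / (a + n * b) - θ n) *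
            (a - a * b / (a + n * b) - θ n) :=
          mul_nonneg (by linarith) (by linarith)
        rw [show θ n - θ n ^ 2 / a = (θ n * a - θ n ^ 2) / a by field_simp,
          show a * b / (a + n * b) - (a * b / (a + n * b)) ^ 2 / a
            = ((a * b / (a + n * b)) * a - (a * b / (a + n * b)) ^ 2) / a by
              field_simp]
        apply (div_le_div_iff_of_pos_right ha).mpr
        nlinarith [hfac]
      have h3 : a * b / (a + n * b) - (a * b / (a + n * b))^2 / a
          ≤ a * b / (a + (n+1 : ℕ) * b) := by
        push_cast
        have : a + ((n:ℝ) + 1) * b = (a + n * b) + b := by ring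
        rw [this]
        rw [div_pow, div_div, div_sub_div _ _ (ne_of_gt hs) (by positivity),
          div_le_div_iff₀ (by positivity) hs2]
        nlinarith [mul_nonneg (mul_nonneg (mul_nonneg (sq_nonneg a) hb.le) hs.le)
          (sq_nonneg b)]
      linarith
  have hkey := key k
  have hden : (0:ℝ) < a + k * b := by positivity
  have hfin : a * b / (a + k * b) ≤ ε := by
    rw [div_le_iff₀ hden]
    have h4 : a / ε - a / b ≤ (k:ℝ) := by
      have : a / b ≥ 4 := by rw [ge_iff_le, le_div_iff₀ hb]; nlinarith
      linarith
    have h5 : ε * (a / ε) = a := by field_simp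
    have h6 : b * (a / b) = a := by field_simp
    nlinarith [mul_le_mul_of_nonneg_left h4 (le_of_lt (mul_pos hε0 hb)),
      mul_pos hε0 hb]
  linarith
end
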